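/- arXiv:2109.13542 — 2 statements merged into one kernel-verified Lean document; each statement's English description precedes it below -/
import Mathlib

section
/- Let $\{m_n\}_{n\ge 0}$ be non-decreasing positive integers, $W_n \in \mathbb{R}^{m_n \times m_{n-1}}$, and $b_n \in \mathbb{R}^{m_n}$. Suppose: (i) $\sum_{n=1}^\infty \|b_n\|_p < \infty$; (ii) for every $i \ge 1$ and every choice of $J_k \in \mathcal{D}_{m_k}$, the limit $\lim_{n\to\infty} I_{\infty,m_n} \prod_{k=i}^n J_k W_k$ exists in operator norm; (iii) there exists $C > 0$ with $\prod_{j=i}^n \|W_j\|_p \le C$ for all $1 \le i \le n$. Then for any choice of $J_n \in \mathcal{D}_{m_n}$, the sequence $c_n := I_{\infty,m_n} \sum_{i=1}^n \left(\prod_{k=i+1}^n J_k W_k\right) J_i b_i$ converges in $\ell^p$. -/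
open scoped ENNReal
open Matrix Filter

noncomputable section


/-- The `m' × m` matrix with the identity on top and zero rows below. -/
def Ipad (m' m : ℕ) : Matrix (Fin m') (Fin m) ℝ :=
  Matrix.of fun i j => if (i : ℕ) = (j : ℕ) then 1 else 0

/-- The diagonal entries of an activation matrix are 0 or 1. -/
def ZeroOne {m : ℕ} (J : Fin m → ℝ) : Prop := ∀ i, J i = 0 ∨ J i = 1

/-- A matrix viewed as a bounded linear operator between `ℓ^p` spaces `ℝ^a → ℝ^b`. -/
def matCLM (p : ℝ≥0∞) [Fact (1 ≤ p)] {a b : ℕ} (A : Matrix (Fin b) (Fin a) ℝ) :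
    PiLp p (fun _ : Fin a => ℝ) →L[ℝ] PiLp p (fun _ : Fin b => ℝ) :=
  LinearMap.toContinuousLinearMap <|
    (WithLp.linearEquiv p ℝ (Fin b → ℝ)).symm.toLinearMap ∘ₗ
      A.mulVecLin ∘ₗ (WithLp.linearEquiv p ℝ (Fin a → ℝ)).toLinearMap

/-- Zero-padding of a finite vector into `ℓ^p`. -/
def padLp (p : ℝ≥0∞) [Fact (1 ≤ p)] {m : ℕ} (x : Fin m → ℝ) : lp (fun _ : ℕ => ℝ) p :=
  ∑ i : Fin m, lp.single p (i : ℕ) (x i)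

/-- Zero-padding as a bounded linear operator `ℝ^m → ℓ^p`. -/
def padCLM (p : ℝ≥0∞) [Fact (1 ≤ p)] (m : ℕ) :
    PiLp p (fun _ : Fin m => ℝ) →L[ℝ] lp (fun _ : ℕ => ℝ) p :=
  LinearMap.toContinuousLinearMap
    { toFun := fun x => padLp p ((WithLp.linearEquiv p ℝ (Fin m → ℝ)) x)
      map_add' := by
        intro x y
        simp only [padLp, WithLp.linearEquiv_apply]
        rw [← Finset.sum_add_distrib]
        refine Finset.sum_congr rfl fun i _ => ?_
        apply lp.ext
        funext j
        by_cases h : j = (i : ℕ)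
        · subst h
          simp [lp.single_apply_self]
        · simp [lp.single_apply_ne p _ _ h]
      map_smul' := by
        intro c x
        simp only [padLp, WithLp.linearEquiv_apply, RingHom.id_apply, Finset.smul_sum]
        refine Finset.sum_congr rfl fun i _ => ?_
        exact lp.single_smul p (i : ℕ) c _ }


/-- Componentwise ReLU. -/
def relu {m : ℕ} (x : Fin m → ℝ) : Fin m → ℝ := fun i => max (x i) 0

/-- The unit cube `[0,1]^d`. -/
def cube (d : ℕ) : Set (Fin d → ℝ) := {x | ∀ i, x i ∈ Set.Icc (0:ℝ) 1}

variable {m : ℕ → ℕ}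

/-- The deep ReLU network `N_n(x) = σ(W_n · + b_n) ∘ ⋯ ∘ σ(W_1 · + b_1) (x)`. -/
def net (W : ∀ n, Matrix (Fin (m (n+1))) (Fin (m n)) ℝ) (b : ∀ n, Fin (m (n+1)) → ℝ)
    (x : Fin (m 0) → ℝ) : ∀ n, Fin (m n) → ℝ
  | 0 => x
  | n+1 => relu (W n *ᵥ net W b x n + b n)

/-- The product `J_n W_n ⋯ J_1 W_1`. -/
def prodJW (W : ∀ n, Matrix (Fin (m (n+1))) (Fin (m n)) ℝ)
    (J : ∀ n, Fin (m (n+1)) → ℝ) : ∀ n, Matrix (Fin (m n)) (Fin (m 0)) ℝ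
  | 0 => 1
  | n+1 => (Matrix.diagonal (J n) * W n) * prodJW W J n

/-- The product `J_{i+t} W_{i+t} ⋯ J_{i+1} W_{i+1}` (product of `t` factors starting at layer `i+1`). -/
def prodJWFrom (W : ∀ n, Matrix (Fin (m (n+1))) (Fin (m n)) ℝ)
    (J : ∀ n, Fin (m (n+1)) → ℝ) (i : ℕ) : ∀ t, Matrix (Fin (m (i+t))) (Fin (m i)) ℝ
  | 0 => (1 : Matrix (Fin (m i)) (Fin (m i)) ℝ)
  | t+1 => (Matrix.diagonal (J (i+t)) * W (i+t)) * prodJWFrom W J i t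

/-- `∑_{i=1}^n (∏_{k=i+1}^n J_k W_k) J_i b_i`, defined by the recursion
`c_0 = 0`, `c_{n+1} = J_{n+1} W_{n+1} c_n + J_{n+1} b_{n+1}`. -/
def biasSum (W : ∀ n, Matrix (Fin (m (n+1))) (Fin (m n)) ℝ)
    (J : ∀ n, Fin (m (n+1)) → ℝ) (b : ∀ n, Fin (m (n+1)) → ℝ) : ∀ n, Fin (m n) → ℝ
  | 0 => 0
  | n+1 => (Matrix.diagonal (J n) * W n) *ᵥ biasSum W J b n + Matrix.diagonal (J n) *ᵥ b n

/-- Activation domain of a one-layer network. -/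
def actDom {a c : ℕ} (J : Fin c → ℝ) (W : Matrix (Fin c) (Fin a) ℝ) (b : Fin c → ℝ) :
    Set (Fin a → ℝ) :=
  {x | ∀ j, (J j = 1 → 0 < (W *ᵥ x + b) j) ∧ (J j ≠ 1 → (W *ᵥ x + b) j ≤ 0)}

/-- Activation domains of a multi-layer network. -/
def actDomMulti (W : ∀ n, Matrix (Fin (m (n+1))) (Fin (m n)) ℝ)
    (J : ∀ n, Fin (m (n+1)) → ℝ) (b : ∀ n, Fin (m (n+1)) → ℝ) : ℕ → Set (Fin (m 0) → ℝ)
  | 0 => cube (m 0)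
  | n+1 => {x ∈ actDomMulti W J b n | net W b x n ∈ actDom (J n) (W n) (b n)}

/-- The Toeplitz matrix of a filter mask `w = (w_0, …, w_s)`. -/
def toep (s mm : ℕ) (w : Fin (s+1) → ℝ) : Matrix (Fin (mm + s)) (Fin mm) ℝ :=
  Matrix.of fun i j =>
    if h : (j : ℕ) ≤ (i : ℕ) ∧ (i : ℕ) - (j : ℕ) ≤ s then w ⟨(i : ℕ) - (j : ℕ), by omega⟩ else 0

/-- The widths of a CNN: `m_0 = d`, `m_n = m_{n-1} + s_n`. -/
def cnnWidth (d : ℕ) (s : ℕ → ℕ) : ℕ → ℕ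
  | 0 => d
  | n+1 => cnnWidth d s n + s n

/-- The CNN: layer `n+1` maps `x ↦ σ(x * w^{(n+1)} + b_{n+1})`. -/
def cnnNet (d : ℕ) (s : ℕ → ℕ) (w : ∀ n, Fin (s n + 1) → ℝ)
    (b : ∀ n, Fin (cnnWidth d s (n+1)) → ℝ) (x : Fin d → ℝ) :
    ∀ n, Fin (cnnWidth d s n) → ℝ
  | 0 => x
  | n+1 => relu (fun i => (toep (s n) (cnnWidth d s n) (w n) *ᵥ cnnNet d s w b x n) i + b n i)


section AuxProof

variable (p : ℝ≥0∞) [Fact (1 ≤ p)]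

lemma padLp_apply {k : ℕ} (v : Fin k → ℝ) (j : ℕ) :
    (padLp p v : ∀ _ : ℕ, ℝ) j = if h : j < k then v ⟨j, h⟩ else 0 := by
  rw [padLp, lp.coeFn_sum, Finset.sum_apply]
  by_cases h : j < k
  · rw [dif_pos h, Finset.sum_eq_single (⟨j, h⟩ : Fin k)]
    · exact lp.single_apply_self p j _
    · intro i _ hne
      exact lp.single_apply_ne p _ _ (fun hji => hne (Fin.ext (by simpa using hji.symm)))
    · simp
  · rw [dif_neg h]
    exact Finset.sum_eq_zero fun i _ =>
      lp.single_apply_ne p _ _ (fun hji => h (hji ▸ i.2))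

lemma norm_padLp_le {k : ℕ} (v : Fin k → ℝ) :
    ‖padLp p v‖ ≤ ‖(WithLp.equiv p (Fin k → ℝ)).symm v‖ := by
  by_cases hp : p = ∞
  · subst hp
    rw [lp.norm_eq_ciSup]
    refine ciSup_le fun j => ?_
    rw [padLp_apply]
    split
    · next h =>
      rw [PiLp.norm_eq_ciSup]
      exact le_ciSup (f := fun i : Fin k =>
        ‖((WithLp.equiv ∞ (Fin k → ℝ)).symm v : PiLp ∞ fun _ : Fin k => ℝ) i‖)
        (Set.Finite.bddAbove (Set.finite_range _)) ⟨j, h⟩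
    · simp [norm_nonneg]
  · have hpr : 0 < p.toReal :=
      ENNReal.toReal_pos (by
        have := (Fact.out : (1:ℝ≥0∞) ≤ p); intro h0; rw [h0] at this; simp at this) hp
    have hsum : ‖padLp p v‖ ^ p.toReal = ∑ i : Fin k, ‖v i‖ ^ p.toReal := by
      have hrw : padLp p v = ∑ j ∈ Finset.range k,
          lp.single p j (if h : j < k then v ⟨j, h⟩ else (0:ℝ)) := by
        rw [padLp, Finset.sum_range fun j => lp.single p j (if h : j < k then v ⟨j, h⟩ else (0:ℝ))]
        exact Finset.sum_congr rfl fun i _ => by simp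
      rw [hrw, lp.norm_sum_single hpr]
      rw [Finset.sum_range fun j => ‖if h : j < k then v ⟨j, h⟩ else (0:ℝ)‖ ^ p.toReal]
      exact Finset.sum_congr rfl fun i _ => by simp
    have hsum2 : ‖(WithLp.equiv p (Fin k → ℝ)).symm v‖ ^ p.toReal
        = ∑ i : Fin k, ‖v i‖ ^ p.toReal := by
      rw [PiLp.norm_eq_sum hpr, one_div, Real.rpow_inv_rpow (by positivity) hpr.ne']
      rfl
    refine le_of_eq (Real.rpow_left_injOn hpr.ne' (norm_nonneg _) (norm_nonneg _) ?_)
    simp only [Set.mem_setOf_eq]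
    rw [hsum, hsum2]

lemma pilp_norm_mono {k : ℕ} {u w : Fin k → ℝ} (h : ∀ i, ‖u i‖ ≤ ‖w i‖) :
    ‖(WithLp.equiv p (Fin k → ℝ)).symm u‖ ≤ ‖(WithLp.equiv p (Fin k → ℝ)).symm w‖ := by
  by_cases hp : p = ∞
  · subst hp
    rw [PiLp.norm_eq_ciSup, PiLp.norm_eq_ciSup]
    rcases isEmpty_or_nonempty (Fin k) with he | hne
    · simp [Real.iSup_of_isEmpty]
    · refine ciSup_le fun i => (h i).trans ?_
      exact le_ciSup (f := fun i : Fin k =>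
        ‖((WithLp.equiv ∞ (Fin k → ℝ)).symm w : PiLp ∞ fun _ : Fin k => ℝ) i‖)
        (Set.Finite.bddAbove (Set.finite_range _)) i
  · have hpr : 0 < p.toReal :=
      ENNReal.toReal_pos (by
        have := (Fact.out : (1:ℝ≥0∞) ≤ p); intro h0; rw [h0] at this; simp at this) hp
    rw [PiLp.norm_eq_sum hpr, PiLp.norm_eq_sum hpr]
    refine Real.rpow_le_rpow (by positivity) ?_ (by positivity)
    exact Finset.sum_le_sum fun i _ => Real.rpow_le_rpow (norm_nonneg _) (h i) hpr.le

lemma matCLM_mul {a c e : ℕ} (A : Matrix (Fin e) (Fin c) ℝ) (B : Matrix (Fin c) (Fin a) ℝ) :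
    matCLM p (A * B) = (matCLM p A).comp (matCLM p B) :=
  ContinuousLinearMap.ext fun _ =>
    congrArg (WithLp.equiv p (Fin e → ℝ)).symm (Matrix.mulVec_mulVec _ A B).symm

lemma norm_matCLM_diag_le {k : ℕ} (Jv : Fin k → ℝ) (hJv : ZeroOne Jv) :
    ‖matCLM p (Matrix.diagonal Jv)‖ ≤ 1 := by
  refine ContinuousLinearMap.opNorm_le_bound _ zero_le_one fun x => ?_
  rw [one_mul]
  have : matCLM p (Matrix.diagonal Jv) x
      = (WithLp.equiv p (Fin k → ℝ)).symm (Matrix.diagonal Jv *ᵥ (WithLp.equiv p (Fin k → ℝ) x)) := rfl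
  rw [this]
  have hx : x = (WithLp.equiv p (Fin k → ℝ)).symm (WithLp.equiv p (Fin k → ℝ) x) := rfl
  conv_rhs => rw [hx]
  refine pilp_norm_mono p fun i => ?_
  rw [Matrix.mulVec_diagonal]
  rcases hJv i with h | h <;> simp [h, Real.norm_eq_abs, abs_nonneg]

lemma norm_matCLM_diag_mul_le {a k : ℕ} (Jv : Fin k → ℝ) (hJv : ZeroOne Jv)
    (A : Matrix (Fin k) (Fin a) ℝ) :
    ‖matCLM p (Matrix.diagonal Jv * A)‖ ≤ ‖matCLM p A‖ := by
  rw [matCLM_mul]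
  exact (ContinuousLinearMap.opNorm_comp_le _ _).trans
    (mul_le_of_le_one_left (norm_nonneg _) (norm_matCLM_diag_le p Jv hJv))

variable {m : ℕ → ℕ}

lemma norm_prodJWFrom_le (W : ∀ n, Matrix (Fin (m (n+1))) (Fin (m n)) ℝ)
    (J : ∀ n, Fin (m (n+1)) → ℝ) (hJ : ∀ n, ZeroOne (J n)) (i t : ℕ) :
    ‖matCLM p (prodJWFrom W J i t)‖ ≤ ∏ j ∈ Finset.Ico i (i+t), ‖matCLM p (W j)‖ := by
  induction t with
  | zero =>
    simp only [Nat.add_zero, Finset.Ico_self, Finset.prod_empty]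
    rw [show prodJWFrom W J i 0 = (1 : Matrix (Fin (m i)) (Fin (m i)) ℝ) from rfl]
    rw [show matCLM p (1 : Matrix (Fin (m i)) (Fin (m i)) ℝ)
        = ContinuousLinearMap.id ℝ _ from
      ContinuousLinearMap.ext fun _ =>
        congrArg (WithLp.equiv p (Fin (m i) → ℝ)).symm (Matrix.one_mulVec _)]
    exact ContinuousLinearMap.norm_id_le
  | succ t ih =>
    have hsplit : ∏ j ∈ Finset.Ico i (i+(t+1)), ‖matCLM p (W j)‖
        = ‖matCLM p (W (i+t))‖ * ∏ j ∈ Finset.Ico i (i+t), ‖matCLM p (W j)‖ := by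
      conv_lhs => rw [show i + (t+1) = (i+t)+1 from rfl]
      exact (Finset.prod_Ico_succ_top (Nat.le_add_right i t) _).trans (mul_comm _ _)
    rw [hsplit, show prodJWFrom W J i (t+1)
        = (Matrix.diagonal (J (i+t)) * W (i+t)) * prodJWFrom W J i t from rfl,
      matCLM_mul]
    exact (ContinuousLinearMap.opNorm_comp_le _ _).trans
      (mul_le_mul (norm_matCLM_diag_mul_le p _ (hJ _) _) ih (norm_nonneg _)
        (norm_nonneg _))

/-- cast along equal indices -/
def castv (m : ℕ → ℕ) {a bn : ℕ} (h : a = bn) (v : Fin (m a) → ℝ) : Fin (m bn) → ℝ :=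
  fun j => v (Fin.cast (congrArg m h.symm) j)

lemma castv_rfl {m : ℕ → ℕ} {a : ℕ} (h : a = a) (v : Fin (m a) → ℝ) :
    castv m h v = v :=
  funext fun j => congrArg v (Fin.ext rfl)

lemma padLp_castv {m : ℕ → ℕ} {a bn : ℕ} (h : a = bn) (v : Fin (m a) → ℝ) :
    padLp p (castv m h v) = padLp p v := by
  subst h; rw [castv_rfl]

lemma castv_step (W : ∀ n, Matrix (Fin (m (n+1))) (Fin (m n)) ℝ)
    (J : ∀ n, Fin (m (n+1)) → ℝ) {k n : ℕ} (h : k = n) (v : Fin (m k) → ℝ) :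
    (Matrix.diagonal (J n) * W n) *ᵥ castv m h v
      = castv m (by omega : k+1 = n+1) ((Matrix.diagonal (J k) * W k) *ᵥ v) := by
  subst h; rw [castv_rfl, castv_rfl]

lemma castv_prod (W : ∀ n, Matrix (Fin (m (n+1))) (Fin (m n)) ℝ)
    (J : ∀ n, Fin (m (n+1)) → ℝ) (i : ℕ) {s s' : ℕ} (h : s = s') {n : ℕ}
    (h1 : i+1+s = n) (h2 : i+1+s' = n) (d : Fin (m (i+1)) → ℝ) :
    castv m h1 (prodJWFrom W J (i+1) s *ᵥ d) = castv m h2 (prodJWFrom W J (i+1) s' *ᵥ d) := by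
  subst h; rfl

/-- the `i`-th term of the bias sum at depth `n`. -/
def termv (W : ∀ n, Matrix (Fin (m (n+1))) (Fin (m n)) ℝ)
    (J : ∀ n, Fin (m (n+1)) → ℝ) (b : ∀ n, Fin (m (n+1)) → ℝ) (i n : ℕ) : Fin (m n) → ℝ :=
  if h : i < n then
    castv m (by omega : i+1+(n-1-i) = n)
      (prodJWFrom W J (i+1) (n-1-i) *ᵥ (Matrix.diagonal (J i) *ᵥ b i))
  else 0

lemma termv_of (W : ∀ n, Matrix (Fin (m (n+1))) (Fin (m n)) ℝ)
    (J : ∀ n, Fin (m (n+1)) → ℝ) (b : ∀ n, Fin (m (n+1)) → ℝ) (i n s : ℕ) (h : n = i+1+s) :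
    termv W J b i n
      = castv m h.symm (prodJWFrom W J (i+1) s *ᵥ (Matrix.diagonal (J i) *ᵥ b i)) := by
  subst h
  rw [termv, dif_pos (by omega : i < i+1+s)]
  exact castv_prod W J i (by omega : i+1+s-1-i = s) _ _ _

lemma termv_succ (W : ∀ n, Matrix (Fin (m (n+1))) (Fin (m n)) ℝ)
    (J : ∀ n, Fin (m (n+1)) → ℝ) (b : ∀ n, Fin (m (n+1)) → ℝ) {i n : ℕ} (hin : i < n) :
    termv W J b i (n+1) = (Matrix.diagonal (J n) * W n) *ᵥ termv W J b i n := by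
  obtain ⟨s, rfl⟩ : ∃ s, n = i+1+s := ⟨n-1-i, by omega⟩
  rw [termv_of W J b i (i+1+s) s rfl, termv_of W J b i (i+1+s+1) (s+1) rfl,
    castv_step W J]
  rw [show prodJWFrom W J (i+1) (s+1)
      = (Matrix.diagonal (J (i+1+s)) * W (i+1+s)) * prodJWFrom W J (i+1) s from rfl,
    ← Matrix.mulVec_mulVec]

lemma biasSum_eq (W : ∀ n, Matrix (Fin (m (n+1))) (Fin (m n)) ℝ)
    (J : ∀ n, Fin (m (n+1)) → ℝ) (b : ∀ n, Fin (m (n+1)) → ℝ) (n : ℕ) :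
    biasSum W J b n = ∑ i ∈ Finset.range n, termv W J b i n := by
  induction n with
  | zero => simp [biasSum]
  | succ n ih =>
    rw [show biasSum W J b (n+1)
        = (Matrix.diagonal (J n) * W n) *ᵥ biasSum W J b n
          + Matrix.diagonal (J n) *ᵥ b n from rfl,
      ih, Finset.sum_range_succ]
    congr 1
    · rw [show (Matrix.diagonal (J n) * W n) *ᵥ (∑ i ∈ Finset.range n, termv W J b i n)
          = ∑ i ∈ Finset.range n, (Matrix.diagonal (J n) * W n) *ᵥ termv W J b i n from
        map_sum (Matrix.mulVecLin (Matrix.diagonal (J n) * W n)) _ _]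
      exact Finset.sum_congr rfl fun i hi =>
        (termv_succ W J b (Finset.mem_range.mp hi)).symm
    · rw [termv_of W J b n (n+1) 0 rfl, castv_rfl,
        show prodJWFrom W J (n+1) 0 = (1 : Matrix (Fin (m (n+1))) (Fin (m (n+1))) ℝ) from rfl,
        Matrix.one_mulVec]

end AuxProof
theorem stmt7 (p : ℝ≥0∞) [Fact (1 ≤ p)] (m : ℕ → ℕ) (hpos : ∀ n, 0 < m n)
    (hmono : ∀ n, m n ≤ m (n+1))
    (W : ∀ n, Matrix (Fin (m (n+1))) (Fin (m n)) ℝ)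
    (b : ∀ n, Fin (m (n+1)) → ℝ)
    (hb : Summable fun n => ‖(WithLp.equiv p (Fin (m (n+1)) → ℝ)).symm (b n)‖)
    (hlim : ∀ i : ℕ, ∀ J : ∀ n, Fin (m (n+1)) → ℝ, (∀ n, ZeroOne (J n)) →
      ∃ L : PiLp p (fun _ : Fin (m i) => ℝ) →L[ℝ] lp (fun _ : ℕ => ℝ) p,
        Tendsto (fun t => (padCLM p (m (i+t))).comp (matCLM p (prodJWFrom W J i t)))
          atTop (nhds L))
    (C : ℝ) (hC : 0 < C)
    (hbound : ∀ i n : ℕ, i ≤ n → ∏ j ∈ Finset.Icc i n, ‖matCLM p (W j)‖ ≤ C)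
    (J : ∀ n, Fin (m (n+1)) → ℝ) (hJ : ∀ n, ZeroOne (J n)) :
    ∃ c : lp (fun _ : ℕ => ℝ) p,
      Tendsto (fun n => padLp p (biasSum W J b n)) atTop (nhds c) := by
  classical
  set D : ℝ := max 1 C with hDdef
  have hD1 : (1:ℝ) ≤ D := le_max_left _ _
  have hD0 : (0:ℝ) ≤ D := zero_le_one.trans hD1
  have hprod : ∀ i t : ℕ, ‖matCLM p (prodJWFrom W J (i+1) t)‖ ≤ D := by
    intro i t
    refine (norm_prodJWFrom_le p W J hJ (i+1) t).trans ?_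
    cases t with
    | zero => simp [hDdef]
    | succ t =>
      have hIco : Finset.Ico (i+1) (i+1+(t+1)) = Finset.Icc (i+1) (i+1+t) := by
        rw [show i+1+(t+1) = (i+1+t)+1 from rfl, Finset.Ico_add_one_right_eq_Icc]
      rw [hIco]
      exact (hbound (i+1) (i+1+t) (Nat.le_add_right _ _)).trans (le_max_right _ _)
  set d : ∀ i : ℕ, PiLp p (fun _ : Fin (m (i+1)) => ℝ) :=
    fun i => (WithLp.equiv p (Fin (m (i+1)) → ℝ)).symm (Matrix.diagonal (J i) *ᵥ b i) with hd
  set F : ℕ → ℕ → lp (fun _ : ℕ => ℝ) p := fun n i =>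
    if h : i < n then
      ((padCLM p (m (i+1+(n-1-i)))).comp (matCLM p (prodJWFrom W J (i+1) (n-1-i)))) (d i)
    else 0 with hF
  have hFof : ∀ i n s : ℕ, i < n → n - 1 - i = s →
      ((padCLM p (m (i+1+s))).comp (matCLM p (prodJWFrom W J (i+1) s))) (d i) = F n i := by
    intro i n s hin hs
    subst hs
    simp only [hF]
    rw [dif_pos hin]
  have hpad0 : ∀ k : ℕ, padLp p (0 : Fin k → ℝ) = 0 := by
    intro k
    have h0 : padLp p (0 : Fin k → ℝ)
        = padCLM p k ((WithLp.linearEquiv p ℝ (Fin k → ℝ)).symm 0) := rfl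
    rw [h0, map_zero, map_zero]
  have hFt : ∀ n i, F n i = padLp p (termv W J b i n) := by
    intro n i
    by_cases h : i < n
    · rw [← hFof i n (n-1-i) h rfl, termv_of W J b i n (n-1-i) (by omega), padLp_castv]
      rfl
    · simp only [hF]
      rw [dif_neg h, termv, dif_neg h, hpad0]
  have hkey : ∀ n, padLp p (biasSum W J b n) = ∑' i, F n i := by
    intro n
    have h1 : padLp p (biasSum W J b n)
        = ∑ i ∈ Finset.range n, padLp p (termv W J b i n) := by
      rw [biasSum_eq W J b n]
      have h2 : padLp p (∑ i ∈ Finset.range n, termv W J b i n)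
          = padCLM p (m n) ((WithLp.linearEquiv p ℝ (Fin (m n) → ℝ)).symm
              (∑ i ∈ Finset.range n, termv W J b i n)) := rfl
      rw [h2, map_sum ((WithLp.linearEquiv p ℝ (Fin (m n) → ℝ)).symm)
        (fun i => termv W J b i n) (Finset.range n), map_sum]
      rfl
    have h3 : (∑' i, F n i) = ∑ i ∈ Finset.range n, F n i := by
      refine tsum_eq_sum fun i hi => ?_
      simp only [hF]
      rw [dif_neg (by simpa using hi)]
    rw [h1, h3]
    exact Finset.sum_congr rfl fun i _ => (hFt n i).symm
  have hlim' : ∀ i : ℕ, ∃ L : PiLp p (fun _ : Fin (m (i+1)) => ℝ) →L[ℝ] lp (fun _ : ℕ => ℝ) p,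
      Tendsto (fun t => (padCLM p (m (i+1+t))).comp (matCLM p (prodJWFrom W J (i+1) t)))
        atTop (nhds L) := fun i => hlim (i+1) J hJ
  choose L hL using hlim'
  have htend : ∀ i, Tendsto (fun n => F n i) atTop (nhds (L i (d i))) := by
    intro i
    have h1 : Tendsto (fun t =>
        ((padCLM p (m (i+1+t))).comp (matCLM p (prodJWFrom W J (i+1) t))) (d i))
        atTop (nhds (L i (d i))) :=
      ((ContinuousLinearMap.apply ℝ (lp (fun _ : ℕ => ℝ) p) (d i)).continuous.tendsto
        (L i)).comp (hL i)
    have h2 := h1.comp (tendsto_sub_atTop_nat (i+1))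
    refine h2.congr' ?_
    filter_upwards [eventually_ge_atTop (i+1)] with n hn
    exact hFof i n (n - (i+1)) (by omega) (by omega)
  have hbnd : ∀ n i, ‖F n i‖ ≤ D * ‖(WithLp.equiv p (Fin (m (i+1)) → ℝ)).symm (b i)‖ := by
    intro n i
    by_cases h : i < n
    · rw [← hFof i n (n-1-i) h rfl]
      have hEq : ((padCLM p (m (i+1+(n-1-i)))).comp
            (matCLM p (prodJWFrom W J (i+1) (n-1-i)))) (d i)
          = padLp p (prodJWFrom W J (i+1) (n-1-i) *ᵥ (Matrix.diagonal (J i) *ᵥ b i)) := rfl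
      rw [hEq]
      refine (norm_padLp_le p _).trans ?_
      have hEq2 : (WithLp.equiv p (Fin (m (i+1+(n-1-i))) → ℝ)).symm
            (prodJWFrom W J (i+1) (n-1-i) *ᵥ (Matrix.diagonal (J i) *ᵥ b i))
          = matCLM p (prodJWFrom W J (i+1) (n-1-i)) (d i) := rfl
      rw [hEq2]
      refine (ContinuousLinearMap.le_opNorm _ _).trans ?_
      refine mul_le_mul (hprod i (n-1-i)) ?_ (norm_nonneg _) hD0
      refine pilp_norm_mono p fun j => ?_
      rw [Matrix.mulVec_diagonal]
      rcases hJ i j with h0 | h0 <;>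
        simp [h0, Real.norm_eq_abs, abs_nonneg]
    · simp only [hF]
      rw [dif_neg h, norm_zero]
      positivity
  have hmain : Tendsto (fun n => ∑' i, F n i) atTop (nhds (∑' i, L i (d i))) :=
    tendsto_tsum_of_dominated_convergence (hb.mul_left D) htend
      (Filter.Eventually.of_forall fun n i => hbnd n i)
  exact ⟨∑' i, L i (d i), hmain.congr fun n => (hkey n).symm⟩

end
end

section
/- Let $w^{(n)} = (w^{(n)}_0, \dots, w^{(n)}_{s_n})$ be filter masks with $w^{(n)}_0 = 1$ for all $n$, and $b_n \in \mathbb{R}^{m_n}$ bias vectors, where $m_0 = d$ and $m_n = m_{n-1} + s_n$. If $\sum_{n=1}^\infty \|b_n\|_p < \infty$ and $\sum_{n=1}^\infty \sum_{j=1}^{s_n} |w^{(n)}_j| < \infty$, then the deep ReLU convolutional neural networks $\mathcal{N}_n(x) = \left(\bigodot_{i=1}^n \sigma(\cdot * w^{(i)} + b_i)\right)(x)$, zero-padded into $\ell^p$, converge pointwise on $[0,1]^d$. -/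
open scoped ENNReal
open Matrix Filter

noncomputable section


variable {m : ℕ → ℕ}

namespace CNNAux
variable (p : ℝ≥0∞) [Fact (1 ≤ p)]

/-- PiLp norm of a plain vector. -/
def nrm {m : ℕ} (x : Fin m → ℝ) : ℝ := ‖(WithLp.equiv p (Fin m → ℝ)).symm x‖

/-- shift-by-`j` with zero padding, `ℝ^mm → ℝ^{mm+ss}`. -/
def shv (ss : ℕ) {mm : ℕ} (j : ℕ) (y : Fin mm → ℝ) : Fin (mm + ss) → ℝ :=
  fun i => if h : j ≤ (i : ℕ) ∧ (i : ℕ) - j < mm then y ⟨(i : ℕ) - j, h.2⟩ else 0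

lemma p_ne_zero : p ≠ 0 := fun h => by
  have := (Fact.out : (1:ℝ≥0∞) ≤ p); simp [h] at this

lemma toReal_pos (hp : p ≠ ∞) : 0 < p.toReal :=
  ENNReal.toReal_pos (p_ne_zero p) hp

lemma padLp_apply {m : ℕ} (x : Fin m → ℝ) (k : ℕ) :
    (padLp p x : ∀ _ : ℕ, ℝ) k = if h : k < m then x ⟨k, h⟩ else 0 := by
  rw [padLp, lp.coeFn_sum, Finset.sum_apply]
  by_cases h : k < m
  · rw [dif_pos h]
    rw [Finset.sum_eq_single (⟨k, h⟩ : Fin m)]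
    · simp [lp.single_apply_self]
    · intro i _ hi
      exact lp.single_apply_ne p _ _ (fun hk => hi (by ext; simp [← hk]))
    · simp
  · rw [dif_neg h]
    exact Finset.sum_eq_zero fun i _ => lp.single_apply_ne p _ _ (fun hk => h (hk ▸ i.isLt))

lemma nrm_nonneg {m : ℕ} (x : Fin m → ℝ) : 0 ≤ nrm p x := norm_nonneg _

lemma top_apply_le {ι : Type*} [Fintype ι] (X : PiLp ∞ (fun _ : ι => ℝ)) (i : ι) :
    ‖X i‖ ≤ ‖X‖ := by
  rw [PiLp.norm_eq_ciSup]
  exact le_ciSup (f := fun j => ‖X j‖) (Set.Finite.bddAbove (Set.finite_range _)) i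

lemma top_norm_le {ι : Type*} [Fintype ι] (X : PiLp ∞ (fun _ : ι => ℝ)) {C : ℝ}
    (hC : 0 ≤ C) (h : ∀ i, ‖X i‖ ≤ C) : ‖X‖ ≤ C := by
  rw [PiLp.norm_eq_ciSup]
  rcases isEmpty_or_nonempty ι with hι | hι
  · rw [Real.iSup_of_isEmpty]; exact hC
  · exact ciSup_le h

lemma norm_padLp {m : ℕ} (x : Fin m → ℝ) : ‖padLp p x‖ = nrm p x := by
  rcases eq_or_ne p ∞ with rfl | hp
  · apply le_antisymm
    · apply lp.norm_le_of_forall_le (nrm_nonneg ∞ x)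
      intro k
      rw [padLp_apply]
      by_cases h : k < m
      · rw [dif_pos h]
        exact top_apply_le ((WithLp.equiv ∞ (Fin m → ℝ)).symm x) ⟨k, h⟩
      · rw [dif_neg h]; simpa using nrm_nonneg ∞ x
    · apply top_norm_le _ (norm_nonneg _)
      intro i
      have : ((WithLp.equiv ∞ (Fin m → ℝ)).symm x) i = (padLp ∞ x : ∀ _ : ℕ, ℝ) (i : ℕ) := by
        rw [padLp_apply]; simp [WithLp.equiv_symm_apply, PiLp.toLp_apply]
      rw [this]
      exact lp.norm_apply_le_norm ENNReal.top_ne_zero _ _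
  · have hq : 0 < p.toReal := toReal_pos p hp
    rw [lp.norm_eq_tsum_rpow hq, nrm, PiLp.norm_eq_sum hq]
    congr 1
    rw [tsum_eq_sum (s := Finset.range m) (fun k hk => by
      rw [padLp_apply, dif_neg (by simpa using hk)]
      simp [Real.zero_rpow hq.ne'])]
    rw [← Fin.sum_univ_eq_sum_range (fun k => ‖(padLp p x : ∀ _ : ℕ, ℝ) k‖ ^ p.toReal) m]
    refine Finset.sum_congr rfl fun i _ => ?_
    rw [padLp_apply, dif_pos i.isLt]
    simp [WithLp.equiv_symm_apply, PiLp.toLp_apply]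

lemma nrm_mono {m : ℕ} {x z : Fin m → ℝ} (h : ∀ i, |x i| ≤ |z i|) : nrm p x ≤ nrm p z := by
  rcases eq_or_ne p ∞ with rfl | hp
  · apply top_norm_le _ (nrm_nonneg ∞ z)
    intro i
    calc ‖((WithLp.equiv ∞ (Fin m → ℝ)).symm x) i‖ = |x i| := by
          simp [WithLp.equiv_symm_apply, PiLp.toLp_apply]
      _ ≤ |z i| := h i
      _ = ‖((WithLp.equiv ∞ (Fin m → ℝ)).symm z) i‖ := by
          simp [WithLp.equiv_symm_apply, PiLp.toLp_apply]
      _ ≤ _ := top_apply_le _ i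
  · have hq : 0 < p.toReal := toReal_pos p hp
    rw [nrm, nrm, PiLp.norm_eq_sum hq, PiLp.norm_eq_sum hq]
    apply Real.rpow_le_rpow (by positivity) ?_ (by positivity)
    apply Finset.sum_le_sum
    intro i _
    apply Real.rpow_le_rpow (norm_nonneg _)
    · simpa [WithLp.equiv_symm_apply, PiLp.toLp_apply, Real.norm_eq_abs] using h i
    · exact hq.le

def emb (mm ss j : ℕ) (hj : j ≤ ss) : Fin mm ↪ Fin (mm + ss) :=
  ⟨fun i => ⟨(i : ℕ) + j, by omega⟩, fun a b hab => by
    apply Fin.ext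
    have : (a : ℕ) + j = (b : ℕ) + j := Fin.val_eq_of_eq hab
    omega⟩

lemma nrm_shv {mm ss : ℕ} {j : ℕ} (hj : j ≤ ss) (y : Fin mm → ℝ) :
    nrm p (shv ss j y) = nrm p y := by
  have key : ∀ i : Fin mm, shv ss j y (emb mm ss j hj i) = y i := by
    intro i
    have hc : j ≤ ((emb mm ss j hj i : Fin (mm+ss)) : ℕ) ∧
        ((emb mm ss j hj i : Fin (mm+ss)) : ℕ) - j < mm := by
      constructor
      · show j ≤ (i : ℕ) + j; omega
      · show (i : ℕ) + j - j < mm; simpa using i.isLt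
    rw [shv, dif_pos hc]
    congr 1; apply Fin.ext; show (i : ℕ) + j - j = (i : ℕ); omega
  rcases eq_or_ne p ∞ with rfl | hp
  · apply le_antisymm
    · apply top_norm_le _ (nrm_nonneg ∞ y)
      intro i
      show ‖shv ss j y i‖ ≤ _
      rw [shv]
      by_cases h : j ≤ (i : ℕ) ∧ (i : ℕ) - j < mm
      · rw [dif_pos h]
        exact top_apply_le ((WithLp.equiv ∞ (Fin mm → ℝ)).symm y) _
      · rw [dif_neg h]; simpa using nrm_nonneg ∞ y
    · apply top_norm_le _ (nrm_nonneg ∞ _)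
      intro i
      show ‖y i‖ ≤ _
      rw [← key i]
      exact top_apply_le ((WithLp.equiv ∞ (Fin (mm+ss) → ℝ)).symm (shv ss j y)) _
  · have hq : 0 < p.toReal := toReal_pos p hp
    rw [nrm, nrm, PiLp.norm_eq_sum hq, PiLp.norm_eq_sum hq]
    congr 1
    rw [← Finset.sum_subset (Finset.subset_univ (Finset.univ.map (emb mm ss j hj)))
      (fun i _ hi => ?_)]
    · rw [Finset.sum_map]
      refine Finset.sum_congr rfl fun i _ => ?_
      simp only [WithLp.equiv_symm_apply, PiLp.toLp_apply]
      rw [key i]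
    · have hz : shv ss j y i = 0 := by
        rw [shv]
        apply dif_neg
        intro h
        apply hi
        simp only [Finset.mem_map, Finset.mem_univ, true_and]
        exact ⟨⟨(i:ℕ) - j, h.2⟩, by apply Fin.ext; show (i:ℕ) - j + j = (i:ℕ); omega⟩
      simp only [WithLp.equiv_symm_apply, PiLp.toLp_apply, hz]
      simp [Real.zero_rpow hq.ne']

lemma nrm_add_le {m : ℕ} (x z : Fin m → ℝ) : nrm p (x + z) ≤ nrm p x + nrm p z := by
  rw [nrm, nrm, nrm, WithLp.equiv_symm_apply, WithLp.toLp_add]; exact norm_add_le _ _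

lemma nrm_sum_le {m : ℕ} {ι : Type*} (t : Finset ι) (f : ι → Fin m → ℝ) :
    nrm p (fun i => ∑ k ∈ t, f k i) ≤ ∑ k ∈ t, nrm p (f k) := by
  have h1 : (fun i => ∑ k ∈ t, f k i) = ∑ k ∈ t, f k := by
    funext i; rw [Finset.sum_apply]
  rw [h1, nrm]
  have h2 : (WithLp.equiv p (Fin m → ℝ)).symm (∑ k ∈ t, f k)
      = ∑ k ∈ t, (WithLp.equiv p (Fin m → ℝ)).symm (f k) :=
    map_sum (WithLp.linearEquiv p ℝ (Fin m → ℝ)).symm f t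
  rw [h2]
  exact norm_sum_le _ _

lemma nrm_const_mul {m : ℕ} (c : ℝ) (x : Fin m → ℝ) :
    nrm p (fun i => c * x i) = |c| * nrm p x := by
  have h1 : (fun i => c * x i) = c • x := rfl
  rw [h1, nrm, WithLp.equiv_symm_apply, WithLp.toLp_smul, norm_smul, Real.norm_eq_abs, nrm,
    WithLp.equiv_symm_apply]

/-- Toeplitz action decomposed into shifts. -/
lemma toep_mulVec {ss mm : ℕ} (w : Fin (ss+1) → ℝ) (y : Fin mm → ℝ) (i : Fin (mm + ss)) :
    (toep ss mm w *ᵥ y) i = ∑ k : Fin (ss+1), w k * shv ss (k : ℕ) y i := by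
  have claim1 : ∀ j : Fin mm,
      (∑ k : Fin (ss+1), if (k : ℕ) + (j : ℕ) = (i : ℕ) then w k * y j else 0)
        = toep ss mm w i j * y j := by
    intro j
    rw [toep]
    by_cases h : (j : ℕ) ≤ (i : ℕ) ∧ (i : ℕ) - (j : ℕ) ≤ ss
    · rw [Matrix.of_apply]
      rw [dif_pos h]
      rw [Finset.sum_eq_single (⟨(i:ℕ) - (j:ℕ), by omega⟩ : Fin (ss+1))]
      · rw [if_pos (by simp; omega)]
      · intro k _ hk
        rw [if_neg]
        intro hc
        exact hk (by apply Fin.ext; simp; omega)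
      · simp
    · rw [Matrix.of_apply, dif_neg h, zero_mul]
      apply Finset.sum_eq_zero
      intro k _
      rw [if_neg]
      intro hc
      exact h ⟨by omega, by omega⟩
  have claim2 : ∀ k : Fin (ss+1),
      (∑ j : Fin mm, if (k : ℕ) + (j : ℕ) = (i : ℕ) then w k * y j else 0)
        = w k * shv ss (k : ℕ) y i := by
    intro k
    rw [shv]
    by_cases h : (k : ℕ) ≤ (i : ℕ) ∧ (i : ℕ) - (k : ℕ) < mm
    · rw [dif_pos h]
      rw [Finset.sum_eq_single (⟨(i:ℕ) - (k:ℕ), h.2⟩ : Fin mm)]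
      · rw [if_pos (by simp; omega)]
      · intro j _ hj
        rw [if_neg]
        intro hc
        exact hj (by apply Fin.ext; simp; omega)
      · simp
    · rw [dif_neg h, mul_zero]
      apply Finset.sum_eq_zero
      intro j _
      rw [if_neg]
      intro hc
      exact h ⟨by omega, by omega⟩
  calc (toep ss mm w *ᵥ y) i = ∑ j : Fin mm, toep ss mm w i j * y j := by
        rw [Matrix.mulVec, dotProduct]
    _ = ∑ j : Fin mm, ∑ k : Fin (ss+1), if (k : ℕ) + (j : ℕ) = (i : ℕ) then w k * y j else 0 := by
        exact (Finset.sum_congr rfl fun j _ => (claim1 j)).symm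
    _ = ∑ k : Fin (ss+1), ∑ j : Fin mm, if (k : ℕ) + (j : ℕ) = (i : ℕ) then w k * y j else 0 :=
        Finset.sum_comm
    _ = _ := Finset.sum_congr rfl fun k _ => claim2 k

lemma padLp_sub {m : ℕ} (a b : Fin m → ℝ) : padLp p (a - b) = padLp p a - padLp p b := by
  apply lp.ext
  funext k
  rw [lp.coeFn_sub, Pi.sub_apply, padLp_apply, padLp_apply, padLp_apply]
  by_cases h : k < m
  · rw [dif_pos h, dif_pos h, dif_pos h, Pi.sub_apply]
  · rw [dif_neg h, dif_neg h, dif_neg h, sub_zero]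

lemma padLp_shv0 {mm ss : ℕ} (y : Fin mm → ℝ) : padLp p (shv ss 0 y) = padLp p y := by
  apply lp.ext
  funext k
  rw [padLp_apply, padLp_apply]
  by_cases h : k < mm
  · rw [dif_pos (show k < mm + ss by omega), dif_pos h, shv,
      dif_pos (show 0 ≤ k ∧ k - 0 < mm by omega)]
    rfl
  · rw [dif_neg h]
    by_cases h2 : k < mm + ss
    · rw [dif_pos h2, shv, dif_neg (show ¬(0 ≤ k ∧ k - 0 < mm) by omega)]
    · rw [dif_neg h2]

end CNNAux

theorem stmt13 (p : ℝ≥0∞) [Fact (1 ≤ p)] (d : ℕ) (s : ℕ → ℕ)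
    (w : ∀ n, Fin (s n + 1) → ℝ)
    (b : ∀ n, Fin (cnnWidth d s (n+1)) → ℝ)
    (hw0 : ∀ n, w n 0 = 1)
    (hw : Summable fun n => ∑ j ∈ Finset.univ.erase (0 : Fin (s n + 1)), |w n j|)
    (hb : Summable fun n => ‖(WithLp.equiv p (Fin (cnnWidth d s (n+1)) → ℝ)).symm (b n)‖) :
    ∀ x ∈ cube d, ∃ L : lp (fun _ : ℕ => ℝ) p,
      Tendsto (fun n => padLp p (cnnNet d s w b x n)) atTop (nhds L) := by
  classical
  intro x hx
  set Y : ∀ n, Fin (cnnWidth d s n) → ℝ := cnnNet d s w b x with hY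
  -- nonnegativity of layer outputs
  have hynn : ∀ n i, 0 ≤ Y n i := by
    intro n
    induction n with
    | zero => intro i; exact (hx i).1
    | succ n ih => intro i; exact le_max_right _ _
  set ε : ℕ → ℝ := fun n => ∑ j ∈ Finset.univ.erase (0 : Fin (s n + 1)), |w n j| with hε
  set β : ℕ → ℝ := fun n => CNNAux.nrm p (b n) with hβ
  have hwε : Summable ε := hw
  have hbβ : Summable β := hb
  have hεnn : ∀ n, 0 ≤ ε n := fun n => Finset.sum_nonneg fun k _ => abs_nonneg _
  have hβnn : ∀ n, 0 ≤ β n := fun n => norm_nonneg _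
  -- key one-step estimate
  have key : ∀ n, ‖padLp p (Y (n+1)) - padLp p (Y n)‖ ≤ ε n * CNNAux.nrm p (Y n) + β n := by
    intro n
    set Z : Fin (cnnWidth d s n + s n) → ℝ := Y (n+1) with hZ
    have h0 : padLp p (Y n) = padLp p (CNNAux.shv (s n) 0 (Y n)) :=
      (CNNAux.padLp_shv0 p (Y n)).symm
    have e0 : padLp p (Y (n+1)) = padLp p Z := rfl
    have e1 : padLp p (Y (n+1)) - padLp p (Y n)
        = padLp p (Z - CNNAux.shv (s n) 0 (Y n)) := by
      rw [e0, h0, ← CNNAux.padLp_sub]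
    rw [e1, CNNAux.norm_padLp]
    set bb : Fin (cnnWidth d s n + s n) → ℝ := b n with hbb
    have hβn : CNNAux.nrm p bb = β n := rfl
    have hcomp : ∀ i : Fin (cnnWidth d s n + s n),
        |(Z - CNNAux.shv (s n) 0 (Y n)) i| ≤
        |((fun i => ∑ k ∈ Finset.univ.erase (0 : Fin (s n + 1)),
            w n k * CNNAux.shv (s n) (k : ℕ) (Y n) i) + bb) i| := by
      intro i
      have hsplit : (toep (s n) (cnnWidth d s n) (w n) *ᵥ Y n) i
          = CNNAux.shv (s n) 0 (Y n) i
            + ∑ k ∈ Finset.univ.erase (0 : Fin (s n + 1)),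
                w n k * CNNAux.shv (s n) (k : ℕ) (Y n) i := by
        rw [CNNAux.toep_mulVec, ← Finset.add_sum_erase _ _ (Finset.mem_univ 0),
          hw0 n, one_mul]
        congr 2
      have hY1 : Z i
          = max ((toep (s n) (cnnWidth d s n) (w n) *ᵥ Y n) i + bb i) 0 := rfl
      have hshvnn : 0 ≤ CNNAux.shv (s n) 0 (Y n) i := by
        rw [CNNAux.shv]
        by_cases h : 0 ≤ (i : ℕ) ∧ (i : ℕ) - 0 < cnnWidth d s n
        · rw [dif_pos h]; exact hynn n _
        · rw [dif_neg h]
      have hY2 : CNNAux.shv (s n) 0 (Y n) i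
          = max (CNNAux.shv (s n) 0 (Y n) i) 0 := (max_eq_left hshvnn).symm
      calc |(Z - CNNAux.shv (s n) 0 (Y n)) i|
          = |max ((toep (s n) (cnnWidth d s n) (w n) *ᵥ Y n) i + bb i) 0
              - max (CNNAux.shv (s n) 0 (Y n) i) 0| := by
            rw [Pi.sub_apply, hY1, ← hY2]
        _ ≤ |((toep (s n) (cnnWidth d s n) (w n) *ᵥ Y n) i + bb i)
              - CNNAux.shv (s n) 0 (Y n) i| := abs_max_sub_max_le_abs _ _ _
        _ = |((fun i => ∑ k ∈ Finset.univ.erase (0 : Fin (s n + 1)),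
                w n k * CNNAux.shv (s n) (k : ℕ) (Y n) i) + bb) i| := by
            rw [Pi.add_apply, hsplit]
            ring_nf
    calc CNNAux.nrm p (Z - CNNAux.shv (s n) 0 (Y n))
        ≤ CNNAux.nrm p ((fun i => ∑ k ∈ Finset.univ.erase (0 : Fin (s n + 1)),
            w n k * CNNAux.shv (s n) (k : ℕ) (Y n) i) + bb) := CNNAux.nrm_mono p hcomp
      _ ≤ CNNAux.nrm p (fun i => ∑ k ∈ Finset.univ.erase (0 : Fin (s n + 1)),
            w n k * CNNAux.shv (s n) (k : ℕ) (Y n) i) + CNNAux.nrm p bb :=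
          CNNAux.nrm_add_le p _ _
      _ ≤ (∑ k ∈ Finset.univ.erase (0 : Fin (s n + 1)),
            CNNAux.nrm p (fun i => w n k * CNNAux.shv (s n) (k : ℕ) (Y n) i))
            + CNNAux.nrm p bb := by
          gcongr
          exact CNNAux.nrm_sum_le p _ _
      _ = (∑ k ∈ Finset.univ.erase (0 : Fin (s n + 1)),
            |w n k| * CNNAux.nrm p (Y n)) + CNNAux.nrm p bb := by
          congr 1
          refine Finset.sum_congr rfl fun k _ => ?_
          rw [CNNAux.nrm_const_mul, CNNAux.nrm_shv p (by omega : (k : ℕ) ≤ s n)]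
      _ = ε n * CNNAux.nrm p (Y n) + β n := by
          rw [hβn, hε, ← Finset.sum_mul]
  -- uniform bound on layer norms
  set E : ℝ := ∑' n, ε n with hE
  set B : ℝ := ∑' n, β n with hB
  have hEn : ∀ n, ∑ k ∈ Finset.range n, ε k ≤ E :=
    fun n => Summable.sum_le_tsum _ (fun k _ => hεnn k) hwε
  have hBn : ∀ n, ∑ k ∈ Finset.range n, β k ≤ B :=
    fun n => Summable.sum_le_tsum _ (fun k _ => hβnn k) hbβ
  have hBnn : 0 ≤ B := tsum_nonneg hβnn
  set C : ℝ := (CNNAux.nrm p (Y 0) + B) * Real.exp E with hC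
  have hN : ∀ n, CNNAux.nrm p (Y n)
      ≤ (CNNAux.nrm p (Y 0) + ∑ k ∈ Finset.range n, β k) * ∏ k ∈ Finset.range n, (1 + ε k) := by
    intro n
    induction n with
    | zero => simp
    | succ n ih =>
      have h1 : CNNAux.nrm p (Y (n+1))
          ≤ CNNAux.nrm p (Y n) + (ε n * CNNAux.nrm p (Y n) + β n) := by
        calc CNNAux.nrm p (Y (n+1)) = ‖padLp p (Y (n+1))‖ := (CNNAux.norm_padLp p _).symm
          _ ≤ ‖padLp p (Y n)‖ + ‖padLp p (Y (n+1)) - padLp p (Y n)‖ :=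
              norm_le_norm_add_norm_sub' _ _
          _ ≤ CNNAux.nrm p (Y n) + (ε n * CNNAux.nrm p (Y n) + β n) := by
              rw [CNNAux.norm_padLp]
              exact add_le_add (le_refl _) (key n)
      have hP1 : (1:ℝ) ≤ ∏ k ∈ Finset.range n, (1 + ε k) := by
        calc (1:ℝ) = ∏ _k ∈ Finset.range n, (1:ℝ) := Finset.prod_const_one.symm
          _ ≤ ∏ k ∈ Finset.range n, (1 + ε k) :=
            Finset.prod_le_prod (fun k _ => zero_le_one) (fun k _ => by linarith [hεnn k])
      have hsnn : 0 ≤ ∑ k ∈ Finset.range n, β k := Finset.sum_nonneg fun k _ => hβnn k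
      have h2 : CNNAux.nrm p (Y n) * (1 + ε n)
          ≤ (CNNAux.nrm p (Y 0) + ∑ k ∈ Finset.range n, β k)
              * (∏ k ∈ Finset.range n, (1 + ε k)) * (1 + ε n) :=
        mul_le_mul_of_nonneg_right ih (by linarith [hεnn n])
      have h3 : (1:ℝ) ≤ (∏ k ∈ Finset.range n, (1 + ε k)) * (1 + ε n) := by
        nlinarith [hP1, hεnn n]
      have h4 : β n ≤ β n * ((∏ k ∈ Finset.range n, (1 + ε k)) * (1 + ε n)) :=
        le_mul_of_one_le_right (hβnn n) h3
      rw [Finset.sum_range_succ, Finset.prod_range_succ]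
      nlinarith [h1, h2, h4, hβnn n, hεnn n, hP1, CNNAux.nrm_nonneg p (Y 0), hsnn,
        CNNAux.nrm_nonneg p (Y n)]
  have hNC : ∀ n, CNNAux.nrm p (Y n) ≤ C := by
    intro n
    refine (hN n).trans ?_
    rw [hC]
    have hPle : ∏ k ∈ Finset.range n, (1 + ε k) ≤ Real.exp E := by
      calc ∏ k ∈ Finset.range n, (1 + ε k)
          ≤ ∏ k ∈ Finset.range n, Real.exp (ε k) :=
            Finset.prod_le_prod (fun k _ => by linarith [hεnn k])
              (fun k _ => by linarith [Real.add_one_le_exp (ε k)])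
        _ = Real.exp (∑ k ∈ Finset.range n, ε k) := (Real.exp_sum _ _).symm
        _ ≤ Real.exp E := Real.exp_le_exp.2 (hEn n)
    apply mul_le_mul
    · exact add_le_add (le_refl _) (hBn n)
    · exact hPle
    · exact Finset.prod_nonneg fun k _ => by linarith [hεnn k]
    · have := CNNAux.nrm_nonneg p (Y 0); linarith
  -- summability of consecutive distances
  have hsd : Summable (fun n => dist (padLp p (Y n)) (padLp p (Y (n+1)))) := by
    apply Summable.of_nonneg_of_le (fun n => dist_nonneg) (fun n => ?_)
      ((hwε.mul_right C).add hbβ)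
    rw [dist_eq_norm']
    refine (key n).trans ?_
    have := mul_le_mul_of_nonneg_left (hNC n) (hεnn n)
    linarith
  obtain ⟨L, hL⟩ := cauchySeq_tendsto_of_complete (cauchySeq_of_summable_dist hsd)
  exact ⟨L, hL⟩

end
end
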